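/- Let (Ω, F, P) be a probability space and p(·) a measurable exponent with 0 < p₋ ≤ p₊ ≤ 1. For any nonnegative measurable functions f, g ∈ L_{p(·)}, one has ‖f‖_{p(·)} + ‖g‖_{p(·)} ≤ ‖f + g‖_{p(·)} (reverse triangle inequality). -/

import Mathlib

open MeasureTheory Set ENNReal Filter Topology

noncomputable section

/-- A measurable function `b : [1,∞) → (0,∞)` is slowly varying if for every `ε > 0`,
`t ^ ε * b t` is equivalent (up to multiplicative constants) to a nondecreasing function
and `t ^ (-ε) * b t` is equivalent to a nonincreasing function on `[1,∞)`. -/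
def SlowlyVarying (b : ℝ → ℝ) : Prop :=
  (∀ t : ℝ, 1 ≤ t → 0 < b t) ∧
  ∀ ε : ℝ, 0 < ε →
    ((∃ g : ℝ → ℝ, MonotoneOn g (Set.Ici 1) ∧ ∃ c > (0:ℝ), ∃ C > (0:ℝ),
        ∀ t : ℝ, 1 ≤ t → c * g t ≤ t ^ ε * b t ∧ t ^ ε * b t ≤ C * g t) ∧
     (∃ g : ℝ → ℝ, AntitoneOn g (Set.Ici 1) ∧ ∃ c > (0:ℝ), ∃ C > (0:ℝ),
        ∀ t : ℝ, 1 ≤ t → c * g t ≤ t ^ (-ε) * b t ∧ t ^ (-ε) * b t ≤ C * g t))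

/-- `γ_b(t) = b (max {t, t⁻¹})` for `t > 0`. -/
def gammaB (b : ℝ → ℝ) (t : ℝ) : ℝ := b (max t t⁻¹)

variable {Ω : Type*} [MeasurableSpace Ω]

/-- The variable Lebesgue quasi-norm
`‖f‖_{p(·)} = inf {λ > 0 : ∫ (|f|/λ)^{p(·)} dμ ≤ 1}`. -/
def vLpNorm (μ : Measure Ω) (p : Ω → ℝ) (f : Ω → ℝ) : ℝ :=
  sInf {lam : ℝ | 0 < lam ∧ ∫⁻ ω, ENNReal.ofReal ((|f ω| / lam) ^ p ω) ∂μ ≤ 1}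

/-- `f ∈ L_{p(·)}` : the modular is finite for some `λ > 0`. -/
def MemVLp (μ : Measure Ω) (p : Ω → ℝ) (f : Ω → ℝ) : Prop :=
  ∃ lam > (0:ℝ), ∫⁻ ω, ENNReal.ofReal ((|f ω| / lam) ^ p ω) ∂μ ≤ 1

/-- `‖χ_A‖_{p(·)}`. -/
def chiNorm (μ : Measure Ω) (p : Ω → ℝ) (A : Set Ω) : ℝ :=
  vLpNorm μ p (A.indicator 1)

/-- The variable Lorentz–Karamata quasi-norm `‖f‖_{p(·),q,b}` (with `q ∈ (0,∞]`). -/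
def vLKNorm (μ : Measure Ω) (p : Ω → ℝ) (q : ℝ≥0∞) (b : ℝ → ℝ) (f : Ω → ℝ) : ℝ≥0∞ :=
  if q = ∞ then
    ⨆ t ∈ Set.Ioi (0:ℝ), ENNReal.ofReal
      (t * chiNorm μ p {ω | t < |f ω|} * gammaB b (chiNorm μ p {ω | t < |f ω|}))
  else
    (∫⁻ t in Set.Ioi (0:ℝ), ENNReal.ofReal
      ((t * chiNorm μ p {ω | t < |f ω|} * gammaB b (chiNorm μ p {ω | t < |f ω|})) ^ q.toReal / t))
      ^ (1 / q.toReal)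

/-- Concavity split for `rpow` with exponent in `[0,1]`. -/
private lemma concave_split {q a b x y : ℝ} (hq0 : 0 ≤ q) (hq1 : q ≤ 1)
    (hx : 0 ≤ x) (hy : 0 ≤ y) (ha : 0 ≤ a) (hb : 0 ≤ b) (hab : a + b = 1) :
    a * x ^ q + b * y ^ q ≤ (a * x + b * y) ^ q := by
  have := (Real.concaveOn_rpow hq0 hq1).2 (Set.mem_Ici.2 hx) (Set.mem_Ici.2 hy) ha hb hab
  simpa [smul_eq_mul] using this

/-- The scaling estimate: `(2x/lam0)^q ≤ 2⁻¹ * (x/l)^q` when `lam0 = 2 * 2^(1/pl) * m`,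
`0 < l ≤ m`, `pl ≤ q ≤ 1`. -/
private lemma aux_scale {pl m l x q : ℝ} (hpl : 0 < pl) (hm : 0 < m) (hl : 0 < l)
    (hlm : l ≤ m) (hx : 0 ≤ x) (hq1 : pl ≤ q) (hq2 : q ≤ 1) :
    (2 * x / (2 * (2:ℝ) ^ (1/pl) * m)) ^ q ≤ 2⁻¹ * (x / l) ^ q := by
  set lam0 := 2 * (2:ℝ) ^ (1/pl) * m with hlam0
  have hrp : (0:ℝ) < (2:ℝ) ^ (1/pl) := Real.rpow_pos_of_pos (by norm_num) _
  have hlam0pos : 0 < lam0 := by positivity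
  set c := 2 * l / lam0 with hc
  have hc0 : 0 < c := by positivity
  have hcd : c ≤ (2:ℝ) ^ (-(1/pl)) := by
    have h1 : c ≤ 2 * m / lam0 := by
      rw [hc]
      gcongr
    have h2 : 2 * m / lam0 = ((2:ℝ) ^ (1/pl))⁻¹ := by
      rw [hlam0]
      field_simp
    rw [Real.rpow_neg (by norm_num)]
    exact h1.trans_eq h2
  have hc1 : c ≤ 1 := hcd.trans (Real.rpow_le_one_of_one_le_of_nonpos (by norm_num)
    (neg_nonpos.2 (by positivity)))
  have key : c ^ q ≤ 2⁻¹ := by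
    calc c ^ q ≤ c ^ pl := Real.rpow_le_rpow_of_exponent_ge hc0 hc1 hq1
    _ ≤ ((2:ℝ) ^ (-(1/pl))) ^ pl := Real.rpow_le_rpow hc0.le hcd hpl.le
    _ = (2:ℝ) ^ (-(1/pl) * pl) := by rw [← Real.rpow_mul (by norm_num)]
    _ = (2:ℝ) ^ (-1 : ℝ) := by rw [show -(1/pl) * pl = -1 by field_simp]
    _ = 2⁻¹ := by rw [Real.rpow_neg_one]
  have hfact : 2 * x / lam0 = (x / l) * c := by
    rw [hc]; field_simp
  rw [hfact, Real.mul_rpow (by positivity) hc0.le]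
  calc (x / l) ^ q * c ^ q ≤ (x / l) ^ q * 2⁻¹ :=
        mul_le_mul_of_nonneg_left key (by positivity)
    _ = 2⁻¹ * (x / l) ^ q := by ring


/-- Reverse triangle inequality: if `p₊ ≤ 1`, then for nonnegative `f, g ∈ L_{p(·)}`,
`‖f‖_{p(·)} + ‖g‖_{p(·)} ≤ ‖f + g‖_{p(·)}`. -/
theorem vLpNorm_add_ge (μ : Measure Ω) [IsProbabilityMeasure μ]
    (p : Ω → ℝ) (pl : ℝ) (hpl : 0 < pl)
    (hp : ∀ᵐ ω ∂μ, pl ≤ p ω ∧ p ω ≤ 1)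
    (f g : Ω → ℝ) (hf : Measurable f) (hg : Measurable g)
    (hf0 : ∀ ω, 0 ≤ f ω) (hg0 : ∀ ω, 0 ≤ g ω)
    (hfL : MemVLp μ p f) (hgL : MemVLp μ p g) :
    vLpNorm μ p f + vLpNorm μ p g ≤ vLpNorm μ p (f + g) := by
  classical
  obtain ⟨lf, hlf, hMf⟩ := hfL
  obtain ⟨lg, hlg, hMg⟩ := hgL
  have hp0 : ∀ᵐ ω ∂μ, 0 ≤ p ω ∧ p ω ≤ 1 := hp.mono fun ω h => ⟨hpl.le.trans h.1, h.2⟩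
  have habs : ∀ h : Ω → ℝ, (∀ ω, 0 ≤ h ω) → ∀ ω, |h ω| = h ω := fun h h0 ω => abs_of_nonneg (h0 ω)
  have habsfg : ∀ ω, |(f + g) ω| = f ω + g ω := by
    intro ω
    simp only [Pi.add_apply]
    exact abs_of_nonneg (add_nonneg (hf0 ω) (hg0 ω))
  -- A closed λ gives an upper bound for the quasi-norm
  have hle : ∀ (h : Ω → ℝ) (lam : ℝ), 0 < lam →
      (∫⁻ ω, ENNReal.ofReal ((|h ω| / lam) ^ p ω) ∂μ) ≤ 1 → vLpNorm μ p h ≤ lam :=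
    fun h lam h1 h2 => csInf_le ⟨0, fun x hx => hx.1.le⟩ ⟨h1, h2⟩
  have hgt : ∀ (h : Ω → ℝ) (lam : ℝ), 0 < lam → lam < vLpNorm μ p h →
      1 < ∫⁻ ω, ENNReal.ofReal ((|h ω| / lam) ^ p ω) ∂μ := by
    intro h lam h1 h2
    by_contra hcon
    push_neg at hcon
    exact absurd (hle h lam h1 hcon) (not_le.2 h2)
  -- a closed λ for f + g exists
  set m : ℝ := lf + lg with hmdef
  have hm : 0 < m := by linarith
  set lam0 : ℝ := 2 * (2:ℝ) ^ (1/pl) * m with hlam0def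
  have hrp : (0:ℝ) < (2:ℝ) ^ (1/pl) := Real.rpow_pos_of_pos (by norm_num) _
  have hlam0 : 0 < lam0 := by positivity
  set E : Set Ω := {ω | g ω ≤ f ω} with hEdef
  have hE : MeasurableSet E := measurableSet_le hg hf
  have hhalf : ∀ (h : Ω → ℝ) (l : ℝ), (∀ ω, 0 ≤ h ω) → 0 < l → l ≤ m →
      ∀ᵐ ω ∂μ, (f ω + g ω ≤ 2 * h ω) →
        ENNReal.ofReal ((|(f + g) ω| / lam0) ^ p ω) ≤
          ENNReal.ofReal 2⁻¹ * ENNReal.ofReal ((|h ω| / l) ^ p ω) := by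
    intro h l h0 hl hlm
    filter_upwards [hp] with ω hω hsum
    rw [habsfg ω, habs h h0 ω, ← ENNReal.ofReal_mul (by norm_num)]
    apply ENNReal.ofReal_le_ofReal
    calc ((f ω + g ω) / lam0) ^ p ω ≤ (2 * h ω / lam0) ^ p ω := by
          apply Real.rpow_le_rpow (div_nonneg (by linarith [hf0 ω, hg0 ω]) hlam0.le) _
            (hpl.le.trans hω.1)
          gcongr
      _ ≤ 2⁻¹ * (h ω / l) ^ p ω := aux_scale hpl hm hl hlm (h0 ω) hω.1 hω.2
  have hmem0 : (∫⁻ ω, ENNReal.ofReal ((|(f + g) ω| / lam0) ^ p ω) ∂μ) ≤ 1 := by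
    have h1 : (∫⁻ ω in E, ENNReal.ofReal ((|(f + g) ω| / lam0) ^ p ω) ∂μ) ≤
        ENNReal.ofReal 2⁻¹ := by
      have hae := hhalf f lf hf0 hlf (by rw [hmdef]; linarith)
      calc (∫⁻ ω in E, ENNReal.ofReal ((|(f + g) ω| / lam0) ^ p ω) ∂μ)
          ≤ ∫⁻ ω in E, ENNReal.ofReal 2⁻¹ * ENNReal.ofReal ((|f ω| / lf) ^ p ω) ∂μ := by
            refine lintegral_mono_ae ?_
            filter_upwards [ae_restrict_of_ae hae, ae_restrict_mem hE] with ω h₁ h₂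
            have hgf : g ω ≤ f ω := h₂
            exact h₁ (by linarith)
        _ = ENNReal.ofReal 2⁻¹ * ∫⁻ ω in E, ENNReal.ofReal ((|f ω| / lf) ^ p ω) ∂μ :=
            lintegral_const_mul' _ _ ENNReal.ofReal_ne_top
        _ ≤ ENNReal.ofReal 2⁻¹ * ∫⁻ ω, ENNReal.ofReal ((|f ω| / lf) ^ p ω) ∂μ :=
            mul_le_mul_right (lintegral_mono' Measure.restrict_le_self le_rfl) _
        _ ≤ ENNReal.ofReal 2⁻¹ * 1 := mul_le_mul_right hMf _
        _ = ENNReal.ofReal 2⁻¹ := mul_one _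
    have h2 : (∫⁻ ω in Eᶜ, ENNReal.ofReal ((|(f + g) ω| / lam0) ^ p ω) ∂μ) ≤
        ENNReal.ofReal 2⁻¹ := by
      have hae := hhalf g lg hg0 hlg (by rw [hmdef]; linarith)
      calc (∫⁻ ω in Eᶜ, ENNReal.ofReal ((|(f + g) ω| / lam0) ^ p ω) ∂μ)
          ≤ ∫⁻ ω in Eᶜ, ENNReal.ofReal 2⁻¹ * ENNReal.ofReal ((|g ω| / lg) ^ p ω) ∂μ := by
            refine lintegral_mono_ae ?_
            filter_upwards [ae_restrict_of_ae hae, ae_restrict_mem hE.compl] with ω h₁ h₂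
            refine h₁ ?_
            have : ¬ g ω ≤ f ω := h₂
            linarith [le_of_not_ge this]
        _ = ENNReal.ofReal 2⁻¹ * ∫⁻ ω in Eᶜ, ENNReal.ofReal ((|g ω| / lg) ^ p ω) ∂μ :=
            lintegral_const_mul' _ _ ENNReal.ofReal_ne_top
        _ ≤ ENNReal.ofReal 2⁻¹ * ∫⁻ ω, ENNReal.ofReal ((|g ω| / lg) ^ p ω) ∂μ :=
            mul_le_mul_right (lintegral_mono' Measure.restrict_le_self le_rfl) _
        _ ≤ ENNReal.ofReal 2⁻¹ * 1 := mul_le_mul_right hMg _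
        _ = ENNReal.ofReal 2⁻¹ := mul_one _
    calc (∫⁻ ω, ENNReal.ofReal ((|(f + g) ω| / lam0) ^ p ω) ∂μ)
        = (∫⁻ ω in E, ENNReal.ofReal ((|(f + g) ω| / lam0) ^ p ω) ∂μ)
          + ∫⁻ ω in Eᶜ, ENNReal.ofReal ((|(f + g) ω| / lam0) ^ p ω) ∂μ :=
          (lintegral_add_compl _ hE).symm
      _ ≤ ENNReal.ofReal 2⁻¹ + ENNReal.ofReal 2⁻¹ := add_le_add h1 h2
      _ = 1 := by
          rw [← ENNReal.ofReal_add (by norm_num) (by norm_num)]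
          norm_num
  -- main argument
  refine le_csInf ⟨lam0, hlam0, hmem0⟩ ?_
  rintro lam ⟨hlam, hmod⟩
  by_contra hcon
  push_neg at hcon
  set A : ℝ := vLpNorm μ p f with hAdef
  set B : ℝ := vLpNorm μ p g with hBdef
  have hA0 : 0 ≤ A := Real.sInf_nonneg fun x hx => hx.1.le
  have hB0 : 0 ≤ B := Real.sInf_nonneg fun x hx => hx.1.le
  have hmono : ∀ h : Ω → ℝ, (∀ ω, |h ω| ≤ |(f + g) ω|) → vLpNorm μ p h ≤ lam := by
    intro h hh
    refine hle h lam hlam (le_trans (lintegral_mono_ae (hp0.mono fun ω hω => ?_)) hmod)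
    refine ENNReal.ofReal_le_ofReal (Real.rpow_le_rpow (by positivity) ?_ hω.1)
    exact div_le_div_of_nonneg_right (hh ω) hlam.le |>.trans_eq rfl
  rcases eq_or_lt_of_le hA0 with hA | hA
  · have : B ≤ lam := by
      rw [hBdef]
      refine hmono g fun ω => ?_
      rw [habs g hg0 ω, habsfg ω]
      linarith [hf0 ω]
    linarith
  rcases eq_or_lt_of_le hB0 with hB | hB
  · have : A ≤ lam := by
      rw [hAdef]
      refine hmono f fun ω => ?_
      rw [habs f hf0 ω, habsfg ω]
      linarith [hg0 ω]
    linarith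
  have hABpos : 0 < A + B := by linarith
  set l1 : ℝ := lam * (A / (A + B)) with hl1def
  set l2 : ℝ := lam * (B / (A + B)) with hl2def
  have hl1 : 0 < l1 := by positivity
  have hl2 : 0 < l2 := by positivity
  have hsum : l1 + l2 = lam := by
    rw [hl1def, hl2def]
    field_simp
  have hfrac : lam / (A + B) < 1 := (div_lt_one hABpos).2 hcon
  have hl1A : l1 < A := by
    calc l1 = A * (lam / (A + B)) := by rw [hl1def]; ring
      _ < A * 1 := mul_lt_mul_of_pos_left hfrac hA
      _ = A := mul_one A
  have hl2B : l2 < B := by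
    calc l2 = B * (lam / (A + B)) := by rw [hl2def]; ring
      _ < B * 1 := mul_lt_mul_of_pos_left hfrac hB
      _ = B := mul_one B
  have M1gt := hgt f l1 hl1 hl1A
  have M2gt := hgt g l2 hl2 hl2B
  have hconc : ENNReal.ofReal (l1 / lam) * (∫⁻ ω, ENNReal.ofReal ((|f ω| / l1) ^ p ω) ∂μ)
      + ENNReal.ofReal (l2 / lam) * (∫⁻ ω, ENNReal.ofReal ((|g ω| / l2) ^ p ω) ∂μ)
      ≤ ∫⁻ ω, ENNReal.ofReal ((|(f + g) ω| / lam) ^ p ω) ∂μ := by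
    calc ENNReal.ofReal (l1 / lam) * (∫⁻ ω, ENNReal.ofReal ((|f ω| / l1) ^ p ω) ∂μ)
        + ENNReal.ofReal (l2 / lam) * (∫⁻ ω, ENNReal.ofReal ((|g ω| / l2) ^ p ω) ∂μ)
        ≤ (∫⁻ ω, ENNReal.ofReal (l1 / lam) * ENNReal.ofReal ((|f ω| / l1) ^ p ω) ∂μ)
          + ∫⁻ ω, ENNReal.ofReal (l2 / lam) * ENNReal.ofReal ((|g ω| / l2) ^ p ω) ∂μ :=
          add_le_add (lintegral_const_mul_le _ _) (lintegral_const_mul_le _ _)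
      _ ≤ ∫⁻ ω, (ENNReal.ofReal (l1 / lam) * ENNReal.ofReal ((|f ω| / l1) ^ p ω)
          + ENNReal.ofReal (l2 / lam) * ENNReal.ofReal ((|g ω| / l2) ^ p ω)) ∂μ :=
          le_lintegral_add _ _
      _ ≤ ∫⁻ ω, ENNReal.ofReal ((|(f + g) ω| / lam) ^ p ω) ∂μ := by
          refine lintegral_mono_ae (hp0.mono fun ω hω => ?_)
          rw [← ENNReal.ofReal_mul (by positivity), ← ENNReal.ofReal_mul (by positivity),
            ← ENNReal.ofReal_add (by positivity) (by positivity)]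
          apply ENNReal.ofReal_le_ofReal
          have hid : l1 / lam * (|f ω| / l1) + l2 / lam * (|g ω| / l2) = |(f + g) ω| / lam := by
            rw [habsfg ω, habs f hf0 ω, habs g hg0 ω]
            field_simp
          calc l1 / lam * (|f ω| / l1) ^ p ω + l2 / lam * (|g ω| / l2) ^ p ω
              ≤ (l1 / lam * (|f ω| / l1) + l2 / lam * (|g ω| / l2)) ^ p ω :=
                concave_split hω.1 hω.2 (by positivity) (by positivity)
                  (by positivity) (by positivity)
                  (by rw [← add_div, hsum, div_self hlam.ne'])
            _ = (|(f + g) ω| / lam) ^ p ω := by rw [hid]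
  have hlt : (1 : ℝ≥0∞) <
      ENNReal.ofReal (l1 / lam) * (∫⁻ ω, ENNReal.ofReal ((|f ω| / l1) ^ p ω) ∂μ)
      + ENNReal.ofReal (l2 / lam) * (∫⁻ ω, ENNReal.ofReal ((|g ω| / l2) ^ p ω) ∂μ) := by
    have e1 : (1 : ℝ≥0∞) = ENNReal.ofReal (l1 / lam) + ENNReal.ofReal (l2 / lam) := by
      rw [← ENNReal.ofReal_add (by positivity) (by positivity), ← add_div, hsum,
        div_self hlam.ne', ENNReal.ofReal_one]
    rw [e1]
    have t1 : ENNReal.ofReal (l1 / lam) <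
        ENNReal.ofReal (l1 / lam) * ∫⁻ ω, ENNReal.ofReal ((|f ω| / l1) ^ p ω) ∂μ := by
      nth_rewrite 1 [← mul_one (ENNReal.ofReal (l1 / lam))]
      exact (ENNReal.mul_lt_mul_iff_right (ENNReal.ofReal_pos.2 (by positivity)).ne'
        ENNReal.ofReal_ne_top).2 M1gt
    have t2 : ENNReal.ofReal (l2 / lam) ≤
        ENNReal.ofReal (l2 / lam) * ∫⁻ ω, ENNReal.ofReal ((|g ω| / l2) ^ p ω) ∂μ := by
      nth_rewrite 1 [← mul_one (ENNReal.ofReal (l2 / lam))]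
      exact mul_le_mul_right M2gt.le _
    calc ENNReal.ofReal (l1 / lam) + ENNReal.ofReal (l2 / lam)
        < (ENNReal.ofReal (l1 / lam) * ∫⁻ ω, ENNReal.ofReal ((|f ω| / l1) ^ p ω) ∂μ)
          + ENNReal.ofReal (l2 / lam) :=
          ENNReal.add_lt_add_right ENNReal.ofReal_ne_top t1
      _ ≤ _ := add_le_add_right t2 _
  exact absurd (hconc.trans hmod) (not_le.2 hlt)
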